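/- Fix integer n ≥ 2 and z ≠ 0. The Hessian matrix of S(r_1,...,r_{n−1}) = ∑_j log(1+r_j²) + log(1+|z|²/(r_1²···r_{n−1}²)) at the critical point r_1 = ··· = r_{n−1} = |z|^{1/n} has off-diagonal entries 4/(1+|z|^{2/n})² and diagonal entries 8/(1+|z|^{2/n})², and its determinant equals 4^{n−1}·n/(1+|z|^{2/n})^{2(n−1)}. -/

import Mathlib

open Real Finset

lemma inner_hasfderiv (m : ℕ) (A : ℝ) (hA : 0 < A) (r : Fin m → ℝ) (hr : ∀ l, r l ≠ 0) :
    HasFDerivAt (fun r' : Fin m → ℝ =>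
        (∑ l, Real.log (1 + (r' l) ^ 2)) + Real.log (1 + A / ∏ l, (r' l) ^ 2))
      ((∑ l, (1 + (r l)^2)⁻¹ • ((2 * r l) • (ContinuousLinearMap.proj l : (Fin m → ℝ) →L[ℝ] ℝ)))
        + (((∏ l, (r l)^2) + A)⁻¹ • (∑ l, (∏ k ∈ univ.erase l, (r k)^2) • ((2 * r l) • (ContinuousLinearMap.proj l : (Fin m → ℝ) →L[ℝ] ℝ)))
          - (∏ l, (r l)^2)⁻¹ • (∑ l, (∏ k ∈ univ.erase l, (r k)^2) • ((2 * r l) • (ContinuousLinearMap.proj l : (Fin m → ℝ) →L[ℝ] ℝ))))) r := by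
  have hP : 0 < ∏ l, (r l)^2 :=
    Finset.prod_pos fun l _ => pow_two_pos_of_ne_zero (hr l)
  have hsq : ∀ l, HasFDerivAt (fun r' : Fin m → ℝ => (r' l)^2)
      ((2 * r l) • (ContinuousLinearMap.proj l : (Fin m → ℝ) →L[ℝ] ℝ)) r := by
    intro l
    have h := ((ContinuousLinearMap.proj l : (Fin m → ℝ) →L[ℝ] ℝ).hasFDerivAt (x := r)).mul
      ((ContinuousLinearMap.proj l : (Fin m → ℝ) →L[ℝ] ℝ).hasFDerivAt (x := r))
    have h2 := h.congr_fderiv (g' := (2 * r l) • (ContinuousLinearMap.proj l : (Fin m → ℝ) →L[ℝ] ℝ))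
      (by ext v; simp [two_mul]; ring)
    exact h2.congr_of_eventuallyEq (Filter.Eventually.of_forall fun y => by simp [pow_two])
  have hPd : HasFDerivAt (fun r' : Fin m → ℝ => ∏ l, (r' l)^2)
      (∑ l, (∏ k ∈ univ.erase l, (r k)^2) • ((2 * r l) • (ContinuousLinearMap.proj l : (Fin m → ℝ) →L[ℝ] ℝ))) r :=
    HasFDerivAt.finset_prod fun l _ => hsq l
  have hsum : HasFDerivAt (fun r' : Fin m → ℝ => ∑ l, Real.log (1 + (r' l) ^ 2))
      (∑ l, (1 + (r l)^2)⁻¹ • ((2 * r l) • (ContinuousLinearMap.proj l : (Fin m → ℝ) →L[ℝ] ℝ))) r :=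
    HasFDerivAt.fun_sum fun l _ => ((hsq l).const_add 1).log (by positivity)
  have hlog : HasFDerivAt (fun r' : Fin m → ℝ => Real.log ((∏ l, (r' l)^2) + A) - Real.log (∏ l, (r' l)^2))
      (((∏ l, (r l)^2) + A)⁻¹ • (∑ l, (∏ k ∈ univ.erase l, (r k)^2) • ((2 * r l) • (ContinuousLinearMap.proj l : (Fin m → ℝ) →L[ℝ] ℝ)))
        - (∏ l, (r l)^2)⁻¹ • (∑ l, (∏ k ∈ univ.erase l, (r k)^2) • ((2 * r l) • (ContinuousLinearMap.proj l : (Fin m → ℝ) →L[ℝ] ℝ)))) r :=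
    ((hPd.add_const A).log (by positivity)).sub (hPd.log hP.ne')
  have heq : (fun r' : Fin m → ℝ => Real.log (1 + A / ∏ l, (r' l)^2))
      =ᶠ[nhds r] fun r' : Fin m → ℝ => Real.log ((∏ l, (r' l)^2) + A) - Real.log (∏ l, (r' l)^2) := by
    have hopen : IsOpen {r' : Fin m → ℝ | ∀ l, r' l ≠ 0} := by
      have : {r' : Fin m → ℝ | ∀ l, r' l ≠ 0} = ⋂ l, (fun r' : Fin m → ℝ => r' l) ⁻¹' {0}ᶜ := by
        ext r'; simp [Set.mem_iInter]
      rw [this]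
      exact isOpen_iInter_of_finite fun l => (isOpen_compl_singleton).preimage (continuous_apply l)
    refine Filter.eventuallyEq_of_mem (hopen.mem_nhds hr) fun r' hr' => ?_
    have hP' : 0 < ∏ l, (r' l)^2 := Finset.prod_pos fun l _ => pow_two_pos_of_ne_zero (hr' l)
    have h1 : 1 + A / ∏ l, (r' l)^2 = ((∏ l, (r' l)^2) + A) / ∏ l, (r' l)^2 := by
      field_simp
    simp only [h1]
    rw [Real.log_div (by positivity) hP'.ne']
  exact hsum.add (hlog.congr_of_eventuallyEq heq)

lemma inner_fderiv_eval (m : ℕ) (A : ℝ) (hA : 0 < A) (r : Fin m → ℝ) (hr : ∀ l, r l ≠ 0) (j : Fin m) :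
    fderiv ℝ (fun r' : Fin m → ℝ =>
        (∑ l, Real.log (1 + (r' l) ^ 2)) + Real.log (1 + A / ∏ l, (r' l) ^ 2)) r (Pi.single j 1)
      = 2 * r j / (1 + (r j)^2) - 2 * A / (r j * ((∏ l, (r l)^2) + A)) := by
  rw [(inner_hasfderiv m A hA r hr).fderiv]
  have hP : 0 < ∏ l, (r l)^2 :=
    Finset.prod_pos fun l _ => pow_two_pos_of_ne_zero (hr l)
  have hE : (r j)^2 * ∏ k ∈ univ.erase j, (r k)^2 = ∏ l, (r l)^2 :=
    Finset.mul_prod_erase univ (fun k => (r k)^2) (mem_univ j)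
  simp only [ContinuousLinearMap.add_apply, ContinuousLinearMap.sub_apply,
    ContinuousLinearMap.smul_apply, ContinuousLinearMap.sum_apply,
    ContinuousLinearMap.proj_apply, Pi.single_apply, smul_eq_mul]
  simp only [mul_ite, mul_one, mul_zero, Finset.sum_ite_eq' univ j, mem_univ, if_true]
  have hEne : ∏ k ∈ univ.erase j, (r k)^2 ≠ 0 := by
    have := hP; rw [← hE] at this; intro h; rw [h, mul_zero] at this; exact lt_irrefl 0 this
  rw [← hE]
  have h1 : (1 : ℝ) + r j ^ 2 ≠ 0 := by positivity
  have h2 : r j ^ 2 * ∏ k ∈ univ.erase j, (r k)^2 + A ≠ 0 := by positivity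
  generalize (∏ k ∈ univ.erase j, (r k)^2) = e at hEne h2 ⊢
  have hx := hr j
  field_simp
  ring

lemma outer_eval (m : ℕ) (a : ℝ) (ha : 0 < a) (A : ℝ) (hAa : A = (a^2)^(m+1)) (i j : Fin m) :
    fderiv ℝ (fun r : Fin m → ℝ => 2 * r j / (1 + (r j)^2) - 2 * A / (r j * ((∏ l, (r l)^2) + A)))
      (fun _ => a) (Pi.single i 1)
    = (if i = j then 8 else 4) / (1 + a^2)^2 := by
  set r : Fin m → ℝ := fun _ => a with hrdef
  have hr : ∀ l, r l ≠ 0 := fun l => ha.ne'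
  have hA : 0 < A := by rw [hAa]; positivity
  have hP : 0 < ∏ l, (r l)^2 :=
    Finset.prod_pos fun l _ => pow_two_pos_of_ne_zero (hr l)
  have hsq : ∀ l, HasFDerivAt (fun r' : Fin m → ℝ => (r' l)^2)
      ((2 * r l) • (ContinuousLinearMap.proj l : (Fin m → ℝ) →L[ℝ] ℝ)) r := by
    intro l
    have h := ((ContinuousLinearMap.proj l : (Fin m → ℝ) →L[ℝ] ℝ).hasFDerivAt (x := r)).mul
      ((ContinuousLinearMap.proj l : (Fin m → ℝ) →L[ℝ] ℝ).hasFDerivAt (x := r))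
    have h2 := h.congr_fderiv (g' := (2 * r l) • (ContinuousLinearMap.proj l : (Fin m → ℝ) →L[ℝ] ℝ))
      (by ext v; simp [two_mul]; ring)
    exact h2.congr_of_eventuallyEq (Filter.Eventually.of_forall fun y => by simp [pow_two])
  have hPd : HasFDerivAt (fun r' : Fin m → ℝ => ∏ l, (r' l)^2)
      (∑ l, (∏ k ∈ univ.erase l, (r k)^2) • ((2 * r l) • (ContinuousLinearMap.proj l : (Fin m → ℝ) →L[ℝ] ℝ))) r :=
    HasFDerivAt.finset_prod fun l _ => hsq l
  have hvne : (1 : ℝ) + (r j)^2 ≠ 0 := by positivity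
  have hqne : r j * ((∏ l, (r l)^2) + A) ≠ 0 := mul_ne_zero (hr j) (by positivity)
  have hv : HasFDerivAt (fun r' : Fin m → ℝ => 1 + (r' j)^2)
      ((2 * r j) • (ContinuousLinearMap.proj j : (Fin m → ℝ) →L[ℝ] ℝ)) r := (hsq j).const_add 1
  have hvinv := (hasFDerivAt_inv hvne).comp r hv
  have hu : HasFDerivAt (fun r' : Fin m → ℝ => 2 * r' j)
      ((2 : ℝ) • (ContinuousLinearMap.proj j : (Fin m → ℝ) →L[ℝ] ℝ)) r :=
    ((ContinuousLinearMap.proj j : (Fin m → ℝ) →L[ℝ] ℝ).hasFDerivAt (x := r)).const_mul 2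
  have h1 := hu.mul hvinv
  have hq : HasFDerivAt (fun r' : Fin m → ℝ => r' j * ((∏ l, (r' l)^2) + A))
      ((r j) • (∑ l, (∏ k ∈ univ.erase l, (r k)^2) • ((2 * r l) • (ContinuousLinearMap.proj l : (Fin m → ℝ) →L[ℝ] ℝ)))
        + ((∏ l, (r l)^2) + A) • (ContinuousLinearMap.proj j : (Fin m → ℝ) →L[ℝ] ℝ)) r :=
    ((ContinuousLinearMap.proj j : (Fin m → ℝ) →L[ℝ] ℝ).hasFDerivAt (x := r)).mul (hPd.add_const A)
  have hqinv := (hasFDerivAt_inv hqne).comp r hq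
  have h2 := hqinv.const_mul (2 * A)
  have hG : HasFDerivAt (fun r : Fin m → ℝ => 2 * r j / (1 + (r j)^2) - 2 * A / (r j * ((∏ l, (r l)^2) + A)))
      _ r := (h1.sub h2).congr_of_eventuallyEq
    (Filter.Eventually.of_forall (fun y => by simp only [div_eq_mul_inv, Function.comp_apply, mul_inv, Pi.sub_apply, Pi.mul_apply]; try ring))
  rw [hG.fderiv]
  simp only [ContinuousLinearMap.add_apply, ContinuousLinearMap.sub_apply,
    ContinuousLinearMap.smul_apply, ContinuousLinearMap.sum_apply,
    ContinuousLinearMap.comp_apply, ContinuousLinearMap.smulRight_apply,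
    ContinuousLinearMap.one_apply, ContinuousLinearMap.proj_apply, ContinuousLinearMap.toSpanSingleton_apply,
    Pi.single_apply, smul_eq_mul, mul_ite, mul_one, mul_zero]
  have hm : 0 < m := i.pos
  simp only [hrdef, Finset.sum_ite_eq' univ i, mem_univ, if_true, ite_true, Finset.prod_const,
    Finset.card_erase_of_mem, card_univ, Fintype.card_fin, Function.comp_apply]
  have hm1 : ((a:ℝ)^2) ^ m = (a^2)^(m-1) * a^2 := by
    rw [← pow_succ, Nat.sub_add_cancel hm]
  have hA2 : A = (a^2)^(m-1) * a^2 * a^2 := by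
    rw [hAa, pow_succ, hm1]
  rw [hA2, hm1]
  have he : (0:ℝ) < (a^2)^(m-1) := by positivity
  generalize (a^2 : ℝ)^(m-1) = e at he ⊢
  have h1 : (1:ℝ) + a^2 ≠ 0 := by positivity
  rcases eq_or_ne i j with h | h
  · subst h
    simp only [if_pos rfl, ↓reduceIte]
    field_simp
    ring
  · simp only [if_neg h, if_neg (Ne.symm h)]
    field_simp
    ring

theorem hessian_of_S_at_saddle (n : ℕ) (hn : 2 ≤ n) (z : ℂ) (hz : z ≠ 0) :
    (∀ i j : Fin (n - 1),
      fderiv ℝ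
        (fun r : Fin (n - 1) → ℝ =>
          fderiv ℝ
            (fun r' : Fin (n - 1) → ℝ =>
              (∑ l, Real.log (1 + (r' l) ^ 2)) +
                Real.log (1 + ‖z‖ ^ 2 / ∏ l, (r' l) ^ 2))
            r (Pi.single j 1))
        (fun _ => ‖z‖ ^ ((1 : ℝ) / n)) (Pi.single i 1) =
      (if i = j then 8 else 4) / (1 + ‖z‖ ^ (2 / (n : ℝ))) ^ 2) ∧
    (Matrix.of fun i j : Fin (n - 1) =>
        ((if i = j then 8 else 4) : ℝ) / (1 + ‖z‖ ^ (2 / (n : ℝ))) ^ 2).det =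
      4 ^ (n - 1) * n / (1 + ‖z‖ ^ (2 / (n : ℝ))) ^ (2 * (n - 1)) := by
  have hz' : (0:ℝ) < ‖z‖ := norm_pos_iff.mpr hz
  have hn0 : (n:ℝ) ≠ 0 := by positivity
  constructor
  · intro i j
    set a : ℝ := ‖z‖ ^ ((1 : ℝ)/n) with hadef
    have ha : 0 < a := Real.rpow_pos_of_pos hz' _
    have hA : (0:ℝ) < ‖z‖^2 := by positivity
    have hopen : IsOpen {r' : Fin (n-1) → ℝ | ∀ l, r' l ≠ 0} := by
      have : {r' : Fin (n-1) → ℝ | ∀ l, r' l ≠ 0} = ⋂ l, (fun r' : Fin (n-1) → ℝ => r' l) ⁻¹' {0}ᶜ := by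
        ext r'; simp [Set.mem_iInter]
      rw [this]
      exact isOpen_iInter_of_finite fun l => (isOpen_compl_singleton).preimage (continuous_apply l)
    have hmem : (fun _ : Fin (n-1) => a) ∈ {r' : Fin (n-1) → ℝ | ∀ l, r' l ≠ 0} := fun l => ha.ne'
    have heq : (fun r : Fin (n-1) → ℝ =>
        fderiv ℝ (fun r' : Fin (n-1) → ℝ =>
          (∑ l, Real.log (1 + (r' l) ^ 2)) + Real.log (1 + ‖z‖ ^ 2 / ∏ l, (r' l) ^ 2)) r (Pi.single j 1))
        =ᶠ[nhds (fun _ : Fin (n-1) => a)]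
        (fun r : Fin (n-1) → ℝ => 2 * r j / (1 + (r j)^2) - 2 * ‖z‖^2 / (r j * ((∏ l, (r l)^2) + ‖z‖^2))) :=
      Filter.eventuallyEq_of_mem (hopen.mem_nhds hmem) fun r hr =>
        inner_fderiv_eval (n-1) (‖z‖^2) hA r hr j
    rw [heq.fderiv_eq]
    have hkey : ‖z‖^2 = (a^2)^((n-1)+1) := by
      rw [Nat.sub_add_cancel (by omega : 1 ≤ n), ← pow_mul, hadef,
        ← Real.rpow_natCast (‖z‖ ^ ((1:ℝ)/n)) (2*n), ← Real.rpow_natCast ‖z‖ 2,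
        ← Real.rpow_mul hz'.le]
      congr 1
      push_cast
      field_simp
    rw [outer_eval (n-1) a ha (‖z‖^2) hkey i j]
    have ha2 : a^2 = ‖z‖ ^ (2/(n:ℝ)) := by
      rw [hadef, ← Real.rpow_natCast (‖z‖ ^ ((1:ℝ)/n)) 2, ← Real.rpow_mul hz'.le]
      congr 1
      push_cast
      ring
    rw [ha2]
  · set b : ℝ := ‖z‖ ^ (2/(n:ℝ)) with hbdef
    have hb : 0 < b := Real.rpow_pos_of_pos hz' _
    have hc : (0:ℝ) < (1+b)^2 := by positivity
    have hM : (Matrix.of fun i j : Fin (n - 1) =>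
        ((if i = j then 8 else 4) : ℝ) / (1 + b) ^ 2)
        = (4/(1+b)^2) • ((1 : Matrix (Fin (n-1)) (Fin (n-1)) ℝ)
          + Matrix.replicateCol Unit (fun _ => (1:ℝ)) * Matrix.replicateRow Unit (fun _ => (1:ℝ))) := by
      ext i j
      rcases eq_or_ne i j with h | h
      · subst h
        simp [Matrix.one_apply, Matrix.mul_apply]
        try ring
      · simp [Matrix.one_apply, Matrix.mul_apply, h]
        try ring
    rw [hM, Matrix.det_smul, Matrix.det_one_add_replicateCol_mul_replicateRow]
    have hdot : dotProduct (fun _ : Fin (n-1) => (1:ℝ)) (fun _ => (1:ℝ)) = ((n:ℝ) - 1) := by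
      simp [dotProduct]
      rw [Nat.cast_sub (by omega : 1 ≤ n)]
      simp
    rw [hdot]
    simp only [Fintype.card_fin]
    rw [div_pow, ← pow_mul]
    rw [eq_div_iff (by positivity), div_mul_eq_mul_div, div_mul_cancel₀ _ (by positivity)]
    ring
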